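/- Let M be a symmetric positive semidefinite d×d real matrix and v a vector with ‖v‖ ≤ 1 such that vᵀMv ≥ α > 0. Then there exists a unit eigenvector u of M with eigenvalue at least α/2 such that (u·v)² ≥ α³/(8‖M‖_F³), i.e. |u·v| ≥ (α/(2‖M‖_F))^{3/2} up to an absolute constant. -/

import Mathlib

open Matrix Finset

/-- If `M` is symmetric PSD with positive Frobenius norm, `‖v‖ ≤ 1` and `vᵀ M v ≥ α > 0`, then
there is a unit eigenvector `u` of `M` with eigenvalue at least `α/2` such that
`(u·v)² ≥ α³ / (8 ‖M‖_F³)`. -/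
theorem exists_correlated_eigenvector {d : ℕ} (M : Matrix (Fin d) (Fin d) ℝ)
    (hM : M.PosSemidef) (v : Fin d → ℝ) (hv : v ⬝ᵥ v ≤ 1) (α : ℝ) (hα : 0 < α)
    (hquad : α ≤ v ⬝ᵥ M.mulVec v)
    (hF : 0 < Real.sqrt (∑ i, ∑ j, (M i j) ^ 2)) :
    ∃ (u : Fin d → ℝ) (μ : ℝ), M.mulVec u = μ • u ∧ u ⬝ᵥ u = 1 ∧ α / 2 ≤ μ ∧
      α ^ 3 / (8 * (Real.sqrt (∑ i, ∑ j, (M i j) ^ 2)) ^ 3) ≤ (u ⬝ᵥ v) ^ 2 := by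
  classical
  set F := Real.sqrt (∑ i, ∑ j, (M i j) ^ 2) with hFdef
  have hH := hM.isHermitian
  set b := hH.eigenvectorBasis with hb
  set lam := hH.eigenvalues with hlam
  have hlam0 : ∀ i, 0 ≤ lam i := hM.eigenvalues_nonneg
  have hinner : ∀ x y : EuclideanSpace ℝ (Fin d),
      (inner ℝ x y : ℝ) = (x : Fin d → ℝ) ⬝ᵥ (y : Fin d → ℝ) := by
    intro x y
    simp [PiLp.inner_apply, dotProduct, mul_comm]
  -- Parseval
  have parseval : ∀ x y : Fin d → ℝ,
      ∑ i, ((⇑(b i) : Fin d → ℝ) ⬝ᵥ x) * ((⇑(b i) : Fin d → ℝ) ⬝ᵥ y) = x ⬝ᵥ y := by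
    intro x y
    have := b.sum_inner_mul_inner (WithLp.toLp 2 x : EuclideanSpace ℝ (Fin d)) (WithLp.toLp 2 y : EuclideanSpace ℝ (Fin d))
    simp_rw [hinner] at this
    simpa [dotProduct_comm] using this
  set c : Fin d → ℝ := fun i => (⇑(b i) : Fin d → ℝ) ⬝ᵥ v with hc
  have hc1 : ∑ i, c i ^ 2 ≤ 1 := by
    calc ∑ i, c i ^ 2 = v ⬝ᵥ v := by simpa [sq] using parseval v v
    _ ≤ 1 := hv
  have hMT : Mᵀ = M := hH
  -- eigenvector dot with M v
  have hbMv : ∀ i, (⇑(b i) : Fin d → ℝ) ⬝ᵥ (M.mulVec v) = lam i * c i := by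
    intro i
    rw [dotProduct_mulVec, ← mulVec_transpose, hMT, hH.mulVec_eigenvectorBasis i]
    simp [smul_dotProduct, hc]; rfl
  -- quadratic form in eigenbasis
  have hquad' : α ≤ ∑ i, lam i * c i ^ 2 := by
    have := parseval v (M.mulVec v)
    simp_rw [hbMv] at this
    calc α ≤ v ⬝ᵥ M.mulVec v := hquad
    _ = ∑ i, lam i * c i ^ 2 := by rw [← this]; congr 1; ext i; rw [hc]; ring
  have hbnorm : ∀ i, (⇑(b i) : Fin d → ℝ) ⬝ᵥ (⇑(b i) : Fin d → ℝ) = 1 := by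
    intro i
    have h1 : (inner ℝ (b i) (b i) : ℝ) = 1 := by
      rw [real_inner_self_eq_norm_sq, b.orthonormal.1 i]; norm_num
    rw [← hinner]; exact h1
  -- sum of squared eigenvalues = Frobenius norm squared
  have key : ∑ i, lam i ^ 2 = ∑ j, ∑ k, M j k ^ 2 := by
    have h1 : ∀ i, ∑ j, ((M.mulVec ⇑(b i)) j) ^ 2 = lam i ^ 2 := by
      intro i
      rw [hH.mulVec_eigenvectorBasis i]
      simp only [Pi.smul_apply, smul_eq_mul, mul_pow]
      rw [← Finset.mul_sum]
      have h2 : ∑ j, (⇑(b i) j) ^ 2 = 1 := by simpa [dotProduct, sq] using hbnorm i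
      rw [h2, mul_one]
    calc ∑ i, lam i ^ 2 = ∑ i, ∑ j, ((M.mulVec ⇑(b i)) j) ^ 2 := by simp_rw [h1]
    _ = ∑ j, ∑ i, ((fun k => M j k) ⬝ᵥ (⇑(b i) : Fin d → ℝ)) ^ 2 := by
        rw [Finset.sum_comm]; rfl
    _ = ∑ j, ∑ k, M j k ^ 2 := by
        refine Finset.sum_congr rfl fun j _ => ?_
        have h2 := parseval (fun k => M j k) (fun k => M j k)
        calc ∑ i, ((fun k => M j k) ⬝ᵥ (⇑(b i) : Fin d → ℝ)) ^ 2
            = ∑ i, ((⇑(b i) : Fin d → ℝ) ⬝ᵥ (fun k => M j k))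
              * ((⇑(b i) : Fin d → ℝ) ⬝ᵥ (fun k => M j k)) := by
              simp [sq, dotProduct_comm]
        _ = (fun k => M j k) ⬝ᵥ (fun k => M j k) := h2
        _ = ∑ k, M j k ^ 2 := by simp [dotProduct, sq]
  have hF2 : F ^ 2 = ∑ j, ∑ k, M j k ^ 2 := by
    rw [hFdef]; exact Real.sq_sqrt (by positivity)
  have hlamF : ∀ i, lam i ≤ F := by
    intro i
    have h1 : lam i ^ 2 ≤ ∑ j, lam j ^ 2 :=
      Finset.single_le_sum (f := fun j => lam j ^ 2) (fun _ _ => sq_nonneg _) (mem_univ i)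
    calc lam i = Real.sqrt (lam i ^ 2) := (Real.sqrt_sq (hlam0 i)).symm
    _ ≤ Real.sqrt (∑ j, ∑ k, M j k ^ 2) := Real.sqrt_le_sqrt (key ▸ h1)
    _ = F := rfl
  -- the set of big eigenvalues
  set S : Finset (Fin d) := Finset.univ.filter (fun i => α / 2 ≤ lam i) with hS
  have hbig : α / 2 ≤ ∑ i ∈ S, lam i * c i ^ 2 := by
    have hsplit : ∑ i, lam i * c i ^ 2
        = ∑ i ∈ S, lam i * c i ^ 2 + ∑ i ∈ Sᶜ, lam i * c i ^ 2 :=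
      (Finset.sum_add_sum_compl S _).symm
    have hsmall : ∑ i ∈ Sᶜ, lam i * c i ^ 2 ≤ α / 2 := by
      calc ∑ i ∈ Sᶜ, lam i * c i ^ 2 ≤ ∑ i ∈ Sᶜ, (α / 2) * c i ^ 2 := by
            refine Finset.sum_le_sum fun i hi => ?_
            have : ¬ (α / 2 ≤ lam i) := by
              simp only [hS, Finset.mem_compl, Finset.mem_filter, mem_univ, true_and] at hi
              exact hi
            exact mul_le_mul_of_nonneg_right (le_of_not_ge this) (sq_nonneg _)
      _ ≤ ∑ i, (α / 2) * c i ^ 2 := by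
            refine Finset.sum_le_sum_of_subset_of_nonneg (Finset.subset_univ _) ?_
            intro i _ _; positivity
      _ = (α / 2) * ∑ i, c i ^ 2 := by rw [Finset.mul_sum]
      _ ≤ (α / 2) * 1 := by
            refine mul_le_mul_of_nonneg_left hc1 (by positivity)
      _ = α / 2 := mul_one _
    nlinarith [hquad']
  have hcard : (S.card : ℝ) * (α / 2) ^ 2 ≤ F ^ 2 := by
    calc (S.card : ℝ) * (α / 2) ^ 2 = ∑ _i ∈ S, (α / 2) ^ 2 := by
          rw [Finset.sum_const, nsmul_eq_mul]
    _ ≤ ∑ i ∈ S, lam i ^ 2 := by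
          refine Finset.sum_le_sum fun i hi => ?_
          have h1 : α / 2 ≤ lam i := by
            simp only [hS, Finset.mem_filter, mem_univ, true_and] at hi; exact hi
          exact pow_le_pow_left₀ (by positivity) h1 2
    _ ≤ ∑ i, lam i ^ 2 := by
          refine Finset.sum_le_sum_of_subset_of_nonneg (Finset.subset_univ _) ?_
          intro i _ _; exact sq_nonneg _
    _ = F ^ 2 := by rw [hF2, key]
  set t : ℝ := α ^ 3 / (8 * F ^ 3) with ht
  obtain ⟨i, hiS, hit⟩ : ∃ i ∈ S, t ≤ c i ^ 2 := by
    by_contra hcon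
    push_neg at hcon
    have hSne : S.Nonempty := by
      rcases Finset.eq_empty_or_nonempty S with h | h
      · exfalso; rw [h, Finset.sum_empty] at hbig; linarith
      · exact h
    have hlt : ∑ i ∈ S, lam i * c i ^ 2 < ∑ _i ∈ S, F * t := by
      refine Finset.sum_lt_sum_of_nonempty hSne fun i hi => ?_
      calc lam i * c i ^ 2 ≤ F * c i ^ 2 :=
            mul_le_mul_of_nonneg_right (hlamF i) (sq_nonneg _)
      _ < F * t := by
            exact mul_lt_mul_of_pos_left (hcon i hi) hF
    rw [Finset.sum_const, nsmul_eq_mul] at hlt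
    have h1 : α / 2 < (S.card : ℝ) * (F * t) := lt_of_le_of_lt hbig hlt
    have ht8 : t * (8 * F ^ 3) = α ^ 3 := by
      rw [ht]; field_simp
    nlinarith [hcard, h1, sq_nonneg α, hF, mul_pos hF hF]
  refine ⟨⇑(b i), lam i, hH.mulVec_eigenvectorBasis i, hbnorm i, ?_, ?_⟩
  · simp only [hS, Finset.mem_filter, mem_univ, true_and] at hiS; exact hiS
  · exact hit
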